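/- Let k, l be positive integers and L = 2π√((k² + kl + l²)/3). Define η₁ = -(2πi/(3L))(2k + l), η₂ = η₁ + (2πi/L)k, η₃ = η₂ + (2πi/L)l, and p = (2k + l)(k - l)(2l + k) / (3√3 (k² + kl + l²)^{3/2}). Then each η_j (j = 1, 2, 3) is a root of the equation η³ + η - ip = 0. -/

import Mathlib

open Complex Real

theorem stmt_0 (k l : ℕ) (hk : 0 < k) (hl : 0 < l)
    (L p : ℝ)
    (hL : L = 2 * Real.pi * Real.sqrt (((k:ℝ)^2 + k*l + l^2)/3))
    (hp : p = ((2*(k:ℝ) + l) * ((k:ℝ) - l) * (2*(l:ℝ) + k)) /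
      (3 * Real.sqrt 3 * (((k:ℝ)^2 + k*l + l^2)) ^ ((3:ℝ)/2)))
    (η₁ η₂ η₃ : ℂ)
    (h1 : η₁ = -(2 * Real.pi * Complex.I / (3 * L)) * (2*(k:ℂ) + l))
    (h2 : η₂ = η₁ + (2 * Real.pi * Complex.I / L) * k)
    (h3 : η₃ = η₂ + (2 * Real.pi * Complex.I / L) * l) :
    η₁^3 + η₁ - Complex.I * p = 0 ∧
    η₂^3 + η₂ - Complex.I * p = 0 ∧
    η₃^3 + η₃ - Complex.I * p = 0 := by
  have hπ : (0:ℝ) < Real.pi := Real.pi_pos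
  set Q : ℝ := (k:ℝ)^2 + k*l + l^2 with hQdef
  have hQ : (0:ℝ) < Q := by
    have : (0:ℝ) < (k:ℝ) := by exact_mod_cast hk
    positivity
  set s : ℝ := Real.sqrt Q with hsdef
  have hs : 0 < s := Real.sqrt_pos.mpr hQ
  have hs2 : s^2 = Q := Real.sq_sqrt hQ.le
  have hLpos : 0 < L := by
    rw [hL]
    have : 0 < Real.sqrt (Q/3) := Real.sqrt_pos.mpr (by linarith)
    positivity
  have hL2 : L^2 = 4*Real.pi^2*Q/3 := by
    rw [hL, mul_pow, mul_pow, Real.sq_sqrt (by positivity : (0:ℝ) ≤ Q/3)]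
    ring
  set c : ℝ := 2*Real.pi/L with hcdef
  have hc : 0 < c := by positivity
  have hc2 : c^2 * Q = 3 := by
    rw [hcdef, div_pow]
    rw [div_mul_eq_mul_div, div_eq_iff (by positivity : L^2 ≠ 0), hL2]
    ring
  -- Q^(3/2) = s^3
  have hQ32 : Q ^ ((3:ℝ)/2) = s^3 := by
    rw [show ((3:ℝ)/2) = (1/2) * (3:ℕ) by norm_num, Real.rpow_mul hQ.le,
      Real.rpow_natCast, ← Real.rpow_natCast (Q ^ ((1:ℝ)/2)), Real.rpow_natCast,
      ← Real.sqrt_eq_rpow]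
  have hcs : c * s = Real.sqrt 3 := by
    have h3 : (Real.sqrt 3)^2 = 3 := Real.sq_sqrt (by norm_num)
    nlinarith [Real.sqrt_nonneg 3, mul_pos hc hs, hs2, hc2]
  set M : ℝ := (2*(k:ℝ) + l) * ((k:ℝ) - l) * (2*(l:ℝ) + k) with hMdef
  have hp2 : 27 * p = M * c^3 := by
    rw [hp, hQ32, ← hcs]
    have hc4 : c^4 * s^4 = 9 := by
      calc c^4 * s^4 = (c^2 * s^2)^2 := by ring
        _ = (c^2 * Q)^2 := by rw [hs2]
        _ = 9 := by rw [hc2]; norm_num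
    rw [mul_div_assoc', div_eq_iff (by positivity : (3*(c*s)*s^3) ≠ 0)]
    linear_combination (-3*M)*hc4
  -- complex versions
  have hL0 : (L:ℂ) ≠ 0 := by exact_mod_cast hLpos.ne'
  have hcc : (c:ℂ) = 2*(Real.pi:ℂ)/(L:ℂ) := by
    rw [hcdef]; push_cast; ring
  have e1 : 2*(Real.pi:ℂ)*Complex.I/(3*(L:ℂ)) = Complex.I * c/3 := by
    rw [hcc]; field_simp
  have e2 : 2*(Real.pi:ℂ)*Complex.I/(L:ℂ) = Complex.I * c := by
    rw [hcc]; field_simp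
  have hc2' : c^2 * ((k:ℝ)^2 + (k:ℝ)*(l:ℝ) + (l:ℝ)^2) = 3 := hc2
  have hp2' : 27*p = ((2*(k:ℝ) + l) * ((k:ℝ) - l) * (2*(l:ℝ) + k)) * c^3 := hp2
  have hc2C : (c:ℂ)^2 * ((k:ℂ)^2 + (k:ℂ)*(l:ℂ) + (l:ℂ)^2) = 3 := by
    have := congrArg (Complex.ofReal) hc2'
    push_cast at this; exact this
  have hp2C : 27*(p:ℂ) = ((2*(k:ℂ) + l) * ((k:ℂ) - l) * (2*(l:ℂ) + k)) * (c:ℂ)^3 := by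
    have := congrArg (Complex.ofReal) hp2'
    push_cast at this; exact this
  rw [h3, h2, h1, e1, e2]
  refine ⟨?_, ?_, ?_⟩
  · linear_combination (Complex.I * (c:ℂ) * (2*(k:ℂ)+l)/9) * hc2C + (-Complex.I/27) * hp2C +
      (-Complex.I * (c:ℂ)^3 * (2*(k:ℂ)+l)^3/27) * Complex.I_sq
  · linear_combination (-Complex.I * (c:ℂ) * ((k:ℂ)-l)/9) * hc2C + (-Complex.I/27) * hp2C +
      (Complex.I * (c:ℂ)^3 * ((k:ℂ)-l)^3/27) * Complex.I_sq
  · linear_combination (-Complex.I * (c:ℂ) * ((k:ℂ)+2*l)/9) * hc2C + (-Complex.I/27) * hp2C +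
      (Complex.I * (c:ℂ)^3 * ((k:ℂ)+2*l)^3/27) * Complex.I_sq
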